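/- The face of a commutative monoid Q generated by a subset S equals the set of all q ∈ Q such that q + q' ∈ P for some q' ∈ Q and some p in the submonoid P generated by S; equivalently, the face generated by a single element p is {q ∈ Q : q ≤ n·p for some n ∈ ℕ}, where q ≤ x means x = q + r for some r ∈ Q. -/

import Mathlib

/-- An ideal of a commutative monoid: a subset stable under addition of monoid elements. -/
def IsIdeal {M : Type*} [AddCommMonoid M] (I : Set M) : Prop :=
  ∀ a ∈ I, ∀ m : M, a + m ∈ I

/-- A prime ideal of a commutative monoid: a proper ideal `p` with
`a + b ∈ p → a ∈ p ∨ b ∈ p`. -/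
def IsPrimeIdeal {M : Type*} [AddCommMonoid M] (I : Set M) : Prop :=
  IsIdeal I ∧ I ≠ Set.univ ∧ ∀ a b : M, a + b ∈ I → a ∈ I ∨ b ∈ I

/-- A face of a commutative monoid: a submonoid `F` with `a + b ∈ F → a ∈ F ∧ b ∈ F`. -/
def IsFace {M : Type*} [AddCommMonoid M] (F : Set M) : Prop :=
  ((0 : M) ∈ F ∧ ∀ a ∈ F, ∀ b ∈ F, a + b ∈ F) ∧ ∀ a b : M, a + b ∈ F → a ∈ F ∧ b ∈ F

lemma face_gen_eq {Q : Type*} [AddCommMonoid Q] (S : Set Q) :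
    ⋂₀ {F : Set Q | IsFace F ∧ S ⊆ F} =
      {q : Q | ∃ p ∈ AddSubmonoid.closure S, ∃ q' : Q, q + q' = p} := by
  set D : Set Q := {q : Q | ∃ p ∈ AddSubmonoid.closure S, ∃ q' : Q, q + q' = p} with hD
  have hDface : IsFace D := by
    constructor
    · constructor
      · exact ⟨0, AddSubmonoid.zero_mem _, 0, by simp⟩
      · rintro a ⟨p1, hp1, a', ha⟩ b ⟨p2, hp2, b', hb⟩
        refine ⟨p1 + p2, AddSubmonoid.add_mem _ hp1 hp2, a' + b', ?_⟩
        rw [← ha, ← hb]; abel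
    · rintro a b ⟨p, hp, q', hq⟩
      exact ⟨⟨p, hp, b + q', by rw [← hq]; abel⟩, ⟨p, hp, a + q', by rw [← hq]; abel⟩⟩
  have hSD : S ⊆ D := fun s hs => ⟨s, AddSubmonoid.subset_closure hs, 0, by simp⟩
  apply subset_antisymm
  · exact Set.sInter_subset_of_mem ⟨hDface, hSD⟩
  · rintro q ⟨p, hp, q', hq⟩ F ⟨hF, hSF⟩
    -- closure S ⊆ F
    have hclo : ∀ x ∈ AddSubmonoid.closure S, x ∈ F := by
      intro x hx
      induction hx using AddSubmonoid.closure_induction with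
      | mem y hy => exact hSF hy
      | zero => exact hF.1.1
      | add a b _ _ ha hb => exact hF.1.2 a ha b hb
    exact (hF.2 q q' (hq ▸ hclo p hp)).1

theorem stmt14 {Q : Type*} [AddCommMonoid Q] :
    (∀ S : Set Q, ⋂₀ {F : Set Q | IsFace F ∧ S ⊆ F} =
      {q : Q | ∃ p ∈ AddSubmonoid.closure S, ∃ q' : Q, q + q' = p}) ∧
    (∀ p : Q, ⋂₀ {F : Set Q | IsFace F ∧ p ∈ F} =
      {q : Q | ∃ n : ℕ, ∃ r : Q, q + r = n • p}) := by
  refine ⟨face_gen_eq, fun p => ?_⟩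
  have h := face_gen_eq ({p} : Set Q)
  have : {F : Set Q | IsFace F ∧ ({p} : Set Q) ⊆ F} = {F : Set Q | IsFace F ∧ p ∈ F} := by
    simp [Set.singleton_subset_iff]
  rw [this] at h
  rw [h]
  ext q
  simp only [Set.mem_setOf_eq, AddSubmonoid.mem_closure_singleton]
  constructor
  · rintro ⟨x, ⟨n, hn⟩, q', hq⟩; exact ⟨n, q', by rw [hq, hn]⟩
  · rintro ⟨n, r, hr⟩; exact ⟨n • p, ⟨n, rfl⟩, r, hr⟩
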